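/- Let A be the supercommutative ℝ-superalgebra freely generated by even generators a_n (n ≥ 2) and d_n (n ≥ 1) and odd generators b_n (n ≥ 1) and c_n (n ≥ 2) — concretely, A is the tensor product of the polynomial algebra on the a_n, d_n with the exterior algebra on the b_n, c_n — with the conventions a₀ = 0, a₁ = 1, d₀ = 1, b₀ = 0, c₀ = c₁ = 0. Let D_X, D_Y, D_Z be ℝ-linear derivations of A determined on the generators by: D_X(a_n) = (n+1)a_{n+1} − 2a_n a₂ − b₁c_n, D_X(b_n) = (n+1)b_{n+1} − 2b_n a₂ − b₁d_n, D_X(c_n) = −2c₂a_n + (n+1)c_{n+1} − c_n d₁, D_X(d_n) = −2c₂b_n + (n+1)d_{n+1} − d_n d₁; D_Y(a_n) = (n−1)a_n, D_Y(b_n) = (n−1)b_n, D_Y(c_n) = n·c_n, D_Y(d_n) = n·d_n; D_Z(a_n) = 0, D_Z(b_n) = b_n, D_Z(c_n) = −c_n, D_Z(d_n) = 0. Then D_Y ∘ D_X − D_X ∘ D_Y = D_X, D_X ∘ D_Z − D_Z ∘ D_X = 0, and D_Y ∘ D_Z − D_Z ∘ D_Y = 0. -/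

import Mathlib

open scoped TensorProduct

set_option maxHeartbeats 1000000
set_option synthInstance.maxHeartbeats 1000000

/-- Index type for the even generators: `a_n` (`n ≥ 2`) and `d_n` (`n ≥ 1`). -/
abbrev SuperEvenVar : Type := {n : ℕ // 2 ≤ n} ⊕ {n : ℕ // 1 ≤ n}

/-- Index type for the odd generators: `b_n` (`n ≥ 1`) and `c_n` (`n ≥ 2`). -/
abbrev SuperOddVar : Type := {n : ℕ // 1 ≤ n} ⊕ {n : ℕ // 2 ≤ n}

/-- The supercommutative `ℝ`-superalgebra freely generated by the even generators
`a_n` (`n ≥ 2`), `d_n` (`n ≥ 1`) and the odd generators `b_n` (`n ≥ 1`), `c_n` (`n ≥ 2`):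
the tensor product of the polynomial algebra on the even generators with the exterior
algebra on the odd generators.  (All elements of the polynomial factor are even, so the
ordinary tensor product multiplication agrees with the super one.) -/
abbrev SuperFG2 : Type :=
  MvPolynomial SuperEvenVar ℝ ⊗[ℝ] ExteriorAlgebra ℝ (SuperOddVar →₀ ℝ)

noncomputable def aS (n : ℕ) : SuperFG2 :=
  if h : 2 ≤ n then MvPolynomial.X (Sum.inl ⟨n, h⟩) ⊗ₜ[ℝ] 1
  else if n = 1 then 1 else 0

noncomputable def dS (n : ℕ) : SuperFG2 :=
  if h : 1 ≤ n then MvPolynomial.X (Sum.inr ⟨n, h⟩) ⊗ₜ[ℝ] 1 else 1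

noncomputable def bS (n : ℕ) : SuperFG2 :=
  if h : 1 ≤ n then
    (1 : MvPolynomial SuperEvenVar ℝ) ⊗ₜ[ℝ]
      ExteriorAlgebra.ι ℝ (Finsupp.single (Sum.inl ⟨n, h⟩) (1 : ℝ))
  else 0

noncomputable def cS (n : ℕ) : SuperFG2 :=
  if h : 2 ≤ n then
    (1 : MvPolynomial SuperEvenVar ℝ) ⊗ₜ[ℝ]
      ExteriorAlgebra.ι ℝ (Finsupp.single (Sum.inr ⟨n, h⟩) (1 : ℝ))
  else 0

/-- If `D_X`, `D_Y`, `D_Z` are the (ordinary, `ℝ`-linear, Leibniz) derivations of the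
supercommutative algebra `ℝ[a_n, b_n, c_n, d_n]` determined on the generators by the
formulas of Lemma 4 (action of the even generators `X`, `Y`, `Z` of `𝔤₁ˢ`), then
`[D_Y, D_X] = D_X`, `[D_X, D_Z] = 0` and `[D_Y, D_Z] = 0`. -/
lemma superFG2_derivation_eq_zero (D : SuperFG2 →ₗ[ℝ] SuperFG2)
    (hleib : ∀ x y : SuperFG2, D (x * y) = D x * y + x * D y)
    (ha : ∀ n : ℕ, 2 ≤ n → D (aS n) = 0)
    (hb : ∀ n : ℕ, 1 ≤ n → D (bS n) = 0)
    (hc : ∀ n : ℕ, 2 ≤ n → D (cS n) = 0)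
    (hd : ∀ n : ℕ, 1 ≤ n → D (dS n) = 0) :
    ∀ p : SuperFG2, D p = 0 := by
  have h1 : D 1 = 0 := by
    have h := hleib 1 1
    rw [one_mul, mul_one, one_mul] at h
    exact (right_eq_add.mp h)
  have hx : ∀ x : MvPolynomial SuperEvenVar ℝ,
      D (x ⊗ₜ[ℝ] (1 : ExteriorAlgebra ℝ (SuperOddVar →₀ ℝ))) = 0 := by
    intro x
    induction x using MvPolynomial.induction_on with
    | C a =>
      have : (MvPolynomial.C a : MvPolynomial SuperEvenVar ℝ) ⊗ₜ[ℝ]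
          (1 : ExteriorAlgebra ℝ (SuperOddVar →₀ ℝ)) = a • (1 : SuperFG2) := by
        rw [show (MvPolynomial.C a : MvPolynomial SuperEvenVar ℝ) =
          a • (1 : MvPolynomial SuperEvenVar ℝ) from by
            rw [Algebra.smul_def, mul_one]; rfl]
        rw [← TensorProduct.smul_tmul', Algebra.TensorProduct.one_def]
      rw [this, map_smul, h1, smul_zero]
    | add p q hp hq => rw [TensorProduct.add_tmul, map_add, hp, hq, add_zero]
    | mul_X p i hp =>
      have hXi : D ((MvPolynomial.X i : MvPolynomial SuperEvenVar ℝ) ⊗ₜ[ℝ]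
          (1 : ExteriorAlgebra ℝ (SuperOddVar →₀ ℝ))) = 0 := by
        rcases i with ⟨n, hn⟩ | ⟨n, hn⟩
        · have h := ha n hn; rwa [aS, dif_pos hn] at h
        · have h := hd n hn; rwa [dS, dif_pos hn] at h
      rw [show (p * MvPolynomial.X i) ⊗ₜ[ℝ] (1 : ExteriorAlgebra ℝ (SuperOddVar →₀ ℝ)) =
          (p ⊗ₜ[ℝ] 1) * ((MvPolynomial.X i) ⊗ₜ[ℝ] 1) from by
        rw [Algebra.TensorProduct.tmul_mul_tmul, mul_one]]
      rw [hleib, hp, hXi, zero_mul, mul_zero, add_zero]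
  have hι : ∀ v : SuperOddVar →₀ ℝ,
      D ((1 : MvPolynomial SuperEvenVar ℝ) ⊗ₜ[ℝ] ExteriorAlgebra.ι ℝ v) = 0 := by
    intro v
    induction v using Finsupp.induction with
    | zero => rw [map_zero, TensorProduct.tmul_zero, map_zero]
    | single_add s r w _ _ ih =>
      rw [map_add, TensorProduct.tmul_add, map_add, ih, add_zero]
      rw [show Finsupp.single s r = r • Finsupp.single s (1 : ℝ) from by
        rw [Finsupp.smul_single', mul_one]]
      rw [map_smul, TensorProduct.tmul_smul, map_smul]
      rcases s with ⟨n, hn⟩ | ⟨n, hn⟩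
      · have h := hb n hn; rw [bS, dif_pos hn] at h; rw [h, smul_zero]
      · have h := hc n hn; rw [cS, dif_pos hn] at h; rw [h, smul_zero]
  have hy : ∀ y : ExteriorAlgebra ℝ (SuperOddVar →₀ ℝ),
      D ((1 : MvPolynomial SuperEvenVar ℝ) ⊗ₜ[ℝ] y) = 0 := by
    intro y
    induction y using ExteriorAlgebra.induction with
    | algebraMap r =>
      rw [show (1 : MvPolynomial SuperEvenVar ℝ) ⊗ₜ[ℝ]
          (algebraMap ℝ (ExteriorAlgebra ℝ (SuperOddVar →₀ ℝ)) r) = r • (1 : SuperFG2) from by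
        rw [Algebra.algebraMap_eq_smul_one, TensorProduct.tmul_smul,
          Algebra.TensorProduct.one_def]]
      rw [map_smul, h1, smul_zero]
    | ι v => exact hι v
    | mul a b hA hB =>
      rw [show (1 : MvPolynomial SuperEvenVar ℝ) ⊗ₜ[ℝ] (a * b) =
          ((1 : MvPolynomial SuperEvenVar ℝ) ⊗ₜ[ℝ] a) *
          ((1 : MvPolynomial SuperEvenVar ℝ) ⊗ₜ[ℝ] b) from by
        rw [Algebra.TensorProduct.tmul_mul_tmul, mul_one]]
      rw [hleib, hA, hB, zero_mul, mul_zero, add_zero]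
    | add a b hA hB => rw [TensorProduct.tmul_add, map_add, hA, hB, add_zero]
  intro p
  induction p using TensorProduct.induction_on with
  | zero => exact map_zero D
  | tmul x y =>
    rw [show x ⊗ₜ[ℝ] y = (x ⊗ₜ[ℝ] (1 : ExteriorAlgebra ℝ (SuperOddVar →₀ ℝ))) *
        ((1 : MvPolynomial SuperEvenVar ℝ) ⊗ₜ[ℝ] y) from by
      rw [Algebra.TensorProduct.tmul_mul_tmul, mul_one, one_mul]]
    rw [hleib, hx, hy, zero_mul, mul_zero, add_zero]
  | add a b hA hB => rw [map_add, hA, hB, add_zero]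

theorem stmt15 (DX DY DZ : SuperFG2 →ₗ[ℝ] SuperFG2)
    (hXleib : ∀ x y : SuperFG2, DX (x * y) = DX x * y + x * DX y)
    (hYleib : ∀ x y : SuperFG2, DY (x * y) = DY x * y + x * DY y)
    (hZleib : ∀ x y : SuperFG2, DZ (x * y) = DZ x * y + x * DZ y)
    (hXa : ∀ n : ℕ, 2 ≤ n →
      DX (aS n) = ((n : ℝ) + 1) • aS (n + 1) - (2 : ℝ) • (aS n * aS 2) - bS 1 * cS n)
    (hXb : ∀ n : ℕ, 1 ≤ n →
      DX (bS n) = ((n : ℝ) + 1) • bS (n + 1) - (2 : ℝ) • (bS n * aS 2) - bS 1 * dS n)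
    (hXc : ∀ n : ℕ, 2 ≤ n →
      DX (cS n) = -((2 : ℝ) • (cS 2 * aS n)) + ((n : ℝ) + 1) • cS (n + 1) - cS n * dS 1)
    (hXd : ∀ n : ℕ, 1 ≤ n →
      DX (dS n) = -((2 : ℝ) • (cS 2 * bS n)) + ((n : ℝ) + 1) • dS (n + 1) - dS n * dS 1)
    (hYa : ∀ n : ℕ, 2 ≤ n → DY (aS n) = ((n : ℝ) - 1) • aS n)
    (hYb : ∀ n : ℕ, 1 ≤ n → DY (bS n) = ((n : ℝ) - 1) • bS n)
    (hYc : ∀ n : ℕ, 2 ≤ n → DY (cS n) = (n : ℝ) • cS n)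
    (hYd : ∀ n : ℕ, 1 ≤ n → DY (dS n) = (n : ℝ) • dS n)
    (hZa : ∀ n : ℕ, 2 ≤ n → DZ (aS n) = 0)
    (hZb : ∀ n : ℕ, 1 ≤ n → DZ (bS n) = bS n)
    (hZc : ∀ n : ℕ, 2 ≤ n → DZ (cS n) = -cS n)
    (hZd : ∀ n : ℕ, 1 ≤ n → DZ (dS n) = 0) :
    (∀ p : SuperFG2, DY (DX p) - DX (DY p) = DX p) ∧
    (∀ p : SuperFG2, DX (DZ p) - DZ (DX p) = 0) ∧
    (∀ p : SuperFG2, DY (DZ p) - DZ (DY p) = 0) := by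
  refine ⟨?_, ?_, ?_⟩
  · -- [DY, DX] = DX
    have key : ∀ p : SuperFG2, (DY ∘ₗ DX - DX ∘ₗ DY - DX) p = 0 := by
      apply superFG2_derivation_eq_zero
      · intro x y
        simp only [LinearMap.sub_apply, LinearMap.coe_comp, Function.comp_apply,
          hXleib, hYleib, map_add, sub_mul, mul_sub, add_mul, mul_add]
        abel
      · intro n hn
        simp only [LinearMap.sub_apply, LinearMap.coe_comp, Function.comp_apply,
          hXa n hn, hYa n hn, map_smul, map_sub, hYleib,
          hYa (n+1) (by omega), hYa 2 (by norm_num), hYb 1 (by norm_num), hYc n hn,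
          smul_mul_assoc, mul_smul_comm]
        push_cast
        module
      · intro n hn
        simp only [LinearMap.sub_apply, LinearMap.coe_comp, Function.comp_apply,
          hXb n hn, hYb n hn, map_smul, map_sub, hYleib,
          hYb (n+1) (by omega), hYa 2 (by norm_num), hYb 1 (by norm_num), hYd n hn,
          smul_mul_assoc, mul_smul_comm]
        push_cast
        module
      · intro n hn
        simp only [LinearMap.sub_apply, LinearMap.coe_comp, Function.comp_apply,
          hXc n hn, hYc n hn, map_smul, map_sub, map_add, map_neg, hYleib,
          hYc (n+1) (by omega), hYc 2 (by norm_num), hYa n hn, hYd 1 (by norm_num),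
          smul_mul_assoc, mul_smul_comm]
        push_cast
        module
      · intro n hn
        simp only [LinearMap.sub_apply, LinearMap.coe_comp, Function.comp_apply,
          hXd n hn, hYd n hn, map_smul, map_sub, map_add, map_neg, hYleib,
          hYd (n+1) (by omega), hYc 2 (by norm_num), hYb n hn, hYd 1 (by norm_num),
          smul_mul_assoc, mul_smul_comm]
        push_cast
        module
    intro p
    have h := key p
    simp only [LinearMap.sub_apply, LinearMap.coe_comp, Function.comp_apply] at h
    rw [sub_sub] at h
    have := sub_eq_zero.mp h
    rw [this]
    abel
  · -- [DX, DZ] = 0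
    have hZc' : ∀ n : ℕ, 2 ≤ n → DZ (cS n) = (-1 : ℝ) • cS n :=
      fun n hn => (hZc n hn).trans (neg_one_smul ℝ (cS n)).symm
    have key : ∀ p : SuperFG2, (DX ∘ₗ DZ - DZ ∘ₗ DX) p = 0 := by
      apply superFG2_derivation_eq_zero
      · intro x y
        simp only [LinearMap.sub_apply, LinearMap.coe_comp, Function.comp_apply,
          hXleib, hZleib, map_add, sub_mul, mul_sub, add_mul, mul_add]
        abel
      · intro n hn
        simp only [LinearMap.sub_apply, LinearMap.coe_comp, Function.comp_apply,
          hXa n hn, hZa n hn, map_smul, map_sub, map_zero, hZleib,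
          hZa (n+1) (by omega), hZa 2 (by norm_num), hZb 1 (by norm_num), hZc' n hn,
          smul_mul_assoc, mul_smul_comm]
        simp only [mul_neg, neg_mul, mul_zero, zero_mul, smul_zero, add_zero, zero_add,
          sub_zero, zero_sub, neg_neg, smul_neg, neg_zero, sub_self,
          add_neg_cancel, neg_add_cancel]
        try module
      · intro n hn
        simp only [LinearMap.sub_apply, LinearMap.coe_comp, Function.comp_apply,
          hXb n hn, hZb n hn, map_smul, map_sub, map_zero, hZleib,
          hZb (n+1) (by omega), hZa 2 (by norm_num), hZb 1 (by norm_num), hZd n hn,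
          smul_mul_assoc, mul_smul_comm]
        simp only [mul_neg, neg_mul, mul_zero, zero_mul, smul_zero, add_zero, zero_add,
          sub_zero, zero_sub, neg_neg, smul_neg, neg_zero, sub_self,
          add_neg_cancel, neg_add_cancel]
        try module
      · intro n hn
        simp only [LinearMap.sub_apply, LinearMap.coe_comp, Function.comp_apply,
          hXc n hn, hZc' n hn, map_smul, map_sub, map_add, map_neg, map_zero, hZleib,
          hZc' (n+1) (by omega), hZc' 2 (by norm_num), hZa n hn, hZd 1 (by norm_num),
          smul_mul_assoc, mul_smul_comm]
        simp only [mul_neg, neg_mul, mul_zero, zero_mul, smul_zero, add_zero, zero_add,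
          sub_zero, zero_sub, neg_neg, smul_neg, neg_zero, sub_self,
          add_neg_cancel, neg_add_cancel]
        try module
      · intro n hn
        simp only [LinearMap.sub_apply, LinearMap.coe_comp, Function.comp_apply,
          hXd n hn, hZd n hn, map_smul, map_sub, map_add, map_neg, map_zero, hZleib,
          hZd (n+1) (by omega), hZc' 2 (by norm_num), hZb n hn, hZd 1 (by norm_num),
          smul_mul_assoc, mul_smul_comm]
        simp only [mul_neg, neg_mul, mul_zero, zero_mul, smul_zero, add_zero, zero_add,
          sub_zero, zero_sub, neg_neg, smul_neg, neg_zero, sub_self,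
          add_neg_cancel, neg_add_cancel]
        try module
    intro p
    have h := key p
    simpa only [LinearMap.sub_apply, LinearMap.coe_comp, Function.comp_apply] using h
  · -- [DY, DZ] = 0
    have key : ∀ p : SuperFG2, (DY ∘ₗ DZ - DZ ∘ₗ DY) p = 0 := by
      apply superFG2_derivation_eq_zero
      · intro x y
        simp only [LinearMap.sub_apply, LinearMap.coe_comp, Function.comp_apply,
          hYleib, hZleib, map_add, sub_mul, mul_sub, add_mul, mul_add]
        abel
      · intro n hn
        simp only [LinearMap.sub_apply, LinearMap.coe_comp, Function.comp_apply,
          hYa n hn, hZa n hn, map_smul, map_zero, smul_zero, sub_zero, sub_self]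
      · intro n hn
        simp only [LinearMap.sub_apply, LinearMap.coe_comp, Function.comp_apply,
          hYb n hn, hZb n hn, map_smul, sub_self]
      · intro n hn
        simp only [LinearMap.sub_apply, LinearMap.coe_comp, Function.comp_apply,
          hYc n hn, hZc n hn, map_smul, map_neg, smul_neg, neg_sub, sub_self, neg_zero]
      · intro n hn
        simp only [LinearMap.sub_apply, LinearMap.coe_comp, Function.comp_apply,
          hYd n hn, hZd n hn, map_smul, map_zero, smul_zero, sub_zero, sub_self]
    intro p
    have h := key p
    simpa only [LinearMap.sub_apply, LinearMap.coe_comp, Function.comp_apply] using h
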